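/- Let Γ_post = (λ² Q⁻¹ + H)⁻¹ with H = Aᵀ R⁻¹ A. If Q H Q = Z Θ Zᵀ exactly (with Θ diagonal, positive, and Zᵀ Q⁻¹ Z = I), then Γ_post = λ⁻² Q − Z Δ Zᵀ where Δ is diagonal with entries Δ_{ii} = λ⁻² θ_i/(θ_i + λ²). -/
import Mathlib


open Matrix

/-- Let `Γ_post = (λ² Q⁻¹ + H)⁻¹` with `H = Aᵀ R⁻¹ A`. If `Q H Q = Z Θ Zᵀ`
exactly (with `Θ` diagonal, positive, and `Zᵀ Q⁻¹ Z = I`), then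
`Γ_post = λ⁻² Q − Z Δ Zᵀ` where `Δ` is diagonal with entries
`Δ_{ii} = λ⁻² θ_i/(θ_i + λ²)`. -/
theorem posterior_covariance_low_rank
    {m n k : ℕ} (A : Matrix (Fin m) (Fin n) ℝ)
    (R : Matrix (Fin m) (Fin m) ℝ) (hR : R.PosDef)
    (Q : Matrix (Fin n) (Fin n) ℝ) (hQ : Q.PosDef)
    (l : ℝ) (hl : 0 < l)
    (H : Matrix (Fin n) (Fin n) ℝ) (hH : H = Aᵀ * R⁻¹ * A)
    (Z : Matrix (Fin n) (Fin k) ℝ) (θ : Fin k → ℝ) (hθ : ∀ i, 0 < θ i)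
    (hZorth : Zᵀ * Q⁻¹ * Z = (1 : Matrix (Fin k) (Fin k) ℝ))
    (hfact : Q * H * Q = Z * Matrix.diagonal θ * Zᵀ) :
    (l^2 • Q⁻¹ + H)⁻¹ =
      l⁻¹ ^ 2 • Q - Z * Matrix.diagonal (fun i => l⁻¹ ^ 2 * (θ i / (θ i + l^2))) * Zᵀ := by
  have hln : l ≠ 0 := hl.ne'
  have hQd : IsUnit Q.det := isUnit_iff_ne_zero.mpr hQ.det_pos.ne'
  have hQl : Q⁻¹ * Q = 1 := Matrix.nonsing_inv_mul Q hQd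
  have hQr : Q * Q⁻¹ = 1 := Matrix.mul_nonsing_inv Q hQd
  set Δ : Matrix (Fin k) (Fin k) ℝ :=
    Matrix.diagonal (fun i => l⁻¹ ^ 2 * (θ i / (θ i + l^2))) with hΔ
  have hHQ : H * Q = Q⁻¹ * (Z * Matrix.diagonal θ * Zᵀ) := by
    calc H * Q = Q⁻¹ * (Q * H * Q) := by
          rw [← Matrix.mul_assoc, ← Matrix.mul_assoc, hQl, Matrix.one_mul]
      _ = Q⁻¹ * (Z * Matrix.diagonal θ * Zᵀ) := by rw [hfact]
  have hHZ : H * Z = Q⁻¹ * Z * Matrix.diagonal θ := by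
    calc H * Z = (H * Q) * (Q⁻¹ * Z) := by
          rw [Matrix.mul_assoc, ← Matrix.mul_assoc Q, hQr, Matrix.one_mul]
      _ = Q⁻¹ * (Z * Matrix.diagonal θ * Zᵀ) * (Q⁻¹ * Z) := by rw [hHQ]
      _ = Q⁻¹ * Z * Matrix.diagonal θ * (Zᵀ * Q⁻¹ * Z) := by
          simp only [Matrix.mul_assoc]
      _ = Q⁻¹ * Z * Matrix.diagonal θ := by rw [hZorth, Matrix.mul_one]
  have key : l⁻¹ ^ 2 • Matrix.diagonal θ - l^2 • Δ - Matrix.diagonal θ * Δ = 0 := by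
    rw [hΔ, Matrix.diagonal_mul_diagonal]
    ext i j
    by_cases h : i = j
    · subst h
      simp only [Matrix.sub_apply, Matrix.smul_apply, Matrix.diagonal_apply_eq,
        Matrix.zero_apply, smul_eq_mul]
      have hθi := hθ i
      have hpos : θ i + l^2 ≠ 0 := by positivity
      field_simp
      ring
    · simp [Matrix.diagonal_apply_ne _ h, h]
  apply Matrix.inv_eq_right_inv
  have expand : (l^2 • Q⁻¹ + H) * (l⁻¹ ^ 2 • Q - Z * Δ * Zᵀ)
      = (l^2 * l⁻¹^2) • (Q⁻¹ * Q)
        + Q⁻¹ * Z * (l⁻¹ ^ 2 • Matrix.diagonal θ - l^2 • Δ - Matrix.diagonal θ * Δ) * Zᵀ := by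
    rw [Matrix.add_mul, Matrix.mul_sub, Matrix.mul_sub, Matrix.smul_mul, Matrix.smul_mul,
      Matrix.mul_smul, Matrix.mul_smul, smul_smul]
    have h4 : H * (Z * Δ * Zᵀ) = Q⁻¹ * Z * (Matrix.diagonal θ * Δ) * Zᵀ := by
      rw [← Matrix.mul_assoc, ← Matrix.mul_assoc, hHZ]
      simp only [Matrix.mul_assoc]
    rw [h4, hHQ]
    simp only [Matrix.mul_sub, Matrix.sub_mul, Matrix.mul_smul, Matrix.smul_mul,
      Matrix.mul_assoc]
    abel
  rw [expand, key]
  simp [hQl, mul_pow, hln]
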